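/- Let F be the real or complex numbers and let α ∈ F. There exists an ℓ×ℓ×2 tensor T of rank at most 1 such that (αE_ℓ + J_ℓ; E_ℓ) − T is diagonalizable; in particular the tensor rank of (αE_ℓ + J_ℓ; E_ℓ) over F is at most ℓ + 1. -/

import Mathlib

open Matrix BigOperators

/-- A pair of matrices `(A; B)` admits a simultaneous decomposition into `r`
rank-one tensors. -/
def pairDecomp {F : Type*} [Field F] {m n : Type*} [Fintype m] [Fintype n] (r : ℕ)
    (A B : Matrix m n F) : Prop :=
  ∃ (a : Fin r → m → F) (b : Fin r → n → F) (α β : Fin r → F),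
    A = ∑ i, α i • Matrix.vecMulVec (a i) (b i) ∧
    B = ∑ i, β i • Matrix.vecMulVec (a i) (b i)

/-- The tensor rank of the pair of matrices `(A; B)`. -/
noncomputable def pairRank {F : Type*} [Field F] {m n : Type*} [Fintype m] [Fintype n]
    (A B : Matrix m n F) : ℕ :=
  sInf {r | pairDecomp r A B}

/-- The pair `(A; B)` of rectangular matrices is diagonalizable. -/
def pairDiag {F : Type*} [Field F] {m n : ℕ} (A B : Matrix (Fin m) (Fin n) F) : Prop :=
  ∃ (P : (Matrix (Fin m) (Fin m) F)ˣ) (Q : (Matrix (Fin n) (Fin n) F)ˣ),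
    (∀ (i : Fin m) (j : Fin n), (i : ℕ) ≠ (j : ℕ) → ((P : Matrix (Fin m) (Fin m) F) * A * (Q : Matrix (Fin n) (Fin n) F)) i j = 0) ∧
    (∀ (i : Fin m) (j : Fin n), (i : ℕ) ≠ (j : ℕ) → ((P : Matrix (Fin m) (Fin m) F) * B * (Q : Matrix (Fin n) (Fin n) F)) i j = 0)

/-- The nilpotent Jordan block of size `k`. -/
def jordanNil {F : Type*} [Field F] (k : ℕ) : Matrix (Fin k) (Fin k) F :=
  Matrix.of fun i j => if (i : ℕ) + 1 = (j : ℕ) then 1 else 0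

section aux
variable {F : Type*} [RCLike F]
open Polynomial

variable {F : Type*} [RCLike F]

/-- the characteristic polynomial with roots 0,1,...,n -/
noncomputable def auxPoly (F : Type*) [RCLike F] (n : ℕ) : Polynomial F :=
  ∏ k : Fin (n+1), (X - C ((k : ℕ) : F))

lemma auxPoly_monic (n : ℕ) : (auxPoly F n).Monic :=
  monic_prod_of_monic _ _ fun _ _ => monic_X_sub_C _

lemma auxPoly_natDegree (n : ℕ) : (auxPoly F n).natDegree = n + 1 := by
  rw [auxPoly, natDegree_prod]
  · simp only [natDegree_X_sub_C]; simp
  · intro i _; exact X_sub_C_ne_zero _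

lemma auxPoly_root (n : ℕ) (k : Fin (n+1)) : (auxPoly F n).eval ((k : ℕ) : F) = 0 := by
  rw [auxPoly, eval_prod]
  exact Finset.prod_eq_zero (Finset.mem_univ k) (by simp)

/-- row vector for the companion perturbation -/
noncomputable def auxVec (F : Type*) [RCLike F] (n : ℕ) : Fin (n+1) → F :=
  fun j => -((auxPoly F n).coeff j)

lemma auxVec_sum (n : ℕ) (k : Fin (n+1)) :
    ∑ j : Fin (n+1), auxVec F n j * ((k : ℕ) : F) ^ (j : ℕ) = ((k : ℕ) : F) ^ (n + 1) := by
  have h1 : (auxPoly F n).eval ((k : ℕ) : F) =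
      ∑ i ∈ Finset.range (n + 2), (auxPoly F n).coeff i * ((k : ℕ) : F) ^ i := by
    rw [eval_eq_sum_range, auxPoly_natDegree]
  rw [auxPoly_root] at h1
  rw [Finset.sum_range_succ] at h1
  have hc : (auxPoly F n).coeff (n + 1) = 1 := by
    have := (auxPoly_monic (F := F) n).coeff_natDegree
    rwa [auxPoly_natDegree] at this
  rw [hc, one_mul] at h1
  have h2 : ∑ j : Fin (n+1), auxVec F n j * ((k : ℕ) : F) ^ (j : ℕ)
      = -∑ i ∈ Finset.range (n + 1), (auxPoly F n).coeff i * ((k : ℕ) : F) ^ i := by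
    rw [Finset.sum_range, ← Finset.sum_neg_distrib]
    exact Finset.sum_congr rfl fun j _ => by simp [auxVec]
  rw [h2]
  linear_combination h1

/-- the Vandermonde-type eigenvector matrix -/
noncomputable def auxV (F : Type*) [RCLike F] (n : ℕ) : Matrix (Fin (n+1)) (Fin (n+1)) F :=
  Matrix.of fun i k => ((k : ℕ) : F) ^ (i : ℕ)

lemma auxV_isUnit_det (n : ℕ) : IsUnit (auxV F n).det := by
  have : auxV F n = (Matrix.vandermonde fun k : Fin (n+1) => ((k : ℕ) : F))ᵀ := by
    ext i j; rfl
  rw [this, det_transpose]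
  rw [isUnit_iff_ne_zero, det_vandermonde_ne_zero_iff]
  intro a b hab
  exact Fin.ext (Nat.cast_injective (by exact_mod_cast hab))

/-- last basis vector -/
noncomputable def auxE (F : Type*) [RCLike F] (n : ℕ) : Fin (n+1) → F :=
  fun i => if i = Fin.last n then 1 else 0

/-- the diagonal matrix of eigenvalues -/
noncomputable def auxD (F : Type*) [RCLike F] (n : ℕ) (α : F) : Matrix (Fin (n+1)) (Fin (n+1)) F :=
  Matrix.diagonal fun k => α + ((k : ℕ) : F)

lemma key_eq (n : ℕ) (α : F) :
    (α • (1 : Matrix (Fin (n+1)) (Fin (n+1)) F) + jordanNil (n+1)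
      + vecMulVec (auxE F n) (auxVec F n)) * auxV F n = auxV F n * auxD F n α := by
  ext i k
  rw [auxD, mul_diagonal, mul_apply]
  simp only [Matrix.add_apply, Matrix.smul_apply, one_apply, smul_eq_mul, vecMulVec_apply, jordanNil,
    of_apply, add_mul]
  rw [Finset.sum_add_distrib, Finset.sum_add_distrib]
  have hS1 : ∑ j, (α * if i = j then 1 else 0) * auxV F n j k = α * auxV F n i k := by
    simp [mul_ite, ite_mul, Finset.sum_ite_eq]
  have hS3 : ∑ j, (auxE F n i * auxVec F n j) * auxV F n j k
      = auxE F n i * ((k : ℕ) : F) ^ (n + 1) := by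
    simp_rw [mul_assoc, ← Finset.mul_sum]
    congr 1
    simpa [auxV] using auxVec_sum (F := F) n k
  rw [hS1, hS3]
  by_cases hi : i = Fin.last n
  · have hS2 : ∑ j : Fin (n+1), (if (i : ℕ) + 1 = (j : ℕ) then (1:F) else 0) * auxV F n j k = 0 := by
      apply Finset.sum_eq_zero
      intro j _
      have : (i : ℕ) + 1 ≠ (j : ℕ) := by subst hi; simp [Fin.last]; omega
      simp [this]
    rw [hS2]
    subst hi
    simp only [auxE, if_pos rfl, auxV, of_apply, Fin.val_last, one_mul]
    ring_nf
    simp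
  · have hlt : (i : ℕ) < n := by
      have := i.isLt
      have : (i : ℕ) ≠ n := fun h => hi (Fin.ext (by simp [Fin.last, h]))
      omega
    have hS2 : ∑ j : Fin (n+1), (if (i : ℕ) + 1 = (j : ℕ) then (1:F) else 0) * auxV F n j k
        = ((k : ℕ) : F) ^ ((i : ℕ) + 1) := by
      rw [Finset.sum_eq_single (⟨(i : ℕ) + 1, by omega⟩ : Fin (n+1))]
      · simp [auxV]
      · intro j _ hj
        have : (i : ℕ) + 1 ≠ (j : ℕ) := fun h => hj (by simp [Fin.ext_iff, ← h])
        simp [this]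
      · simp
    rw [hS2]
    simp only [auxE, if_neg hi, auxV, of_apply, zero_mul, add_zero]
    ring

lemma auxM_eq (n : ℕ) (α : F) :
    (α • (1 : Matrix (Fin (n+1)) (Fin (n+1)) F) + jordanNil (n+1)
      + vecMulVec (auxE F n) (auxVec F n)) = auxV F n * auxD F n α * (auxV F n)⁻¹ := by
  have hdet := auxV_isUnit_det (F := F) n
  rw [← key_eq n α, mul_assoc, mul_nonsing_inv _ hdet, mul_one]

lemma sum_col_row (n : ℕ) (c : Fin (n+1) → F) :
    ∑ i : Fin (n+1), c i • vecMulVec (fun j => auxV F n j i) (fun j => (auxV F n)⁻¹ i j)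
      = auxV F n * Matrix.diagonal c * (auxV F n)⁻¹ := by
  ext j k
  rw [Matrix.sum_apply, Matrix.mul_apply]
  simp only [Matrix.mul_diagonal, Matrix.smul_apply, vecMulVec_apply, smul_eq_mul]
  exact Finset.sum_congr rfl fun i _ => by ring

end aux

/-- For `F = ℝ` or `ℂ` and `α ∈ F`, there is a rank at most one tensor `T` such that
`(αE_ℓ + J_ℓ; E_ℓ) − T` is diagonalizable; in particular
`rank (αE_ℓ + J_ℓ; E_ℓ) ≤ ℓ + 1`. -/
theorem jordan_pair_perturb_diagonalizable {F : Type*} [RCLike F] (ℓ : ℕ) (α : F) :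
    (∃ T₁ T₂ : Matrix (Fin ℓ) (Fin ℓ) F, pairDecomp 1 T₁ T₂ ∧
      pairDiag ((α • (1 : Matrix (Fin ℓ) (Fin ℓ) F) + jordanNil ℓ) - T₁)
        ((1 : Matrix (Fin ℓ) (Fin ℓ) F) - T₂)) ∧
    pairRank (α • (1 : Matrix (Fin ℓ) (Fin ℓ) F) + jordanNil ℓ)
      (1 : Matrix (Fin ℓ) (Fin ℓ) F) ≤ ℓ + 1 := by
  rcases ℓ with _ | n
  · constructor
    · exact ⟨0, 0, ⟨0, 0, 0, 0, Subsingleton.elim _ _, Subsingleton.elim _ _⟩,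
        1, 1, fun i => i.elim0, fun i => i.elim0⟩
    · exact Nat.sInf_le ⟨0, 0, 0, 0, Subsingleton.elim _ _, Subsingleton.elim _ _⟩
  · have hdet := auxV_isUnit_det (F := F) n
    set V := auxV F n with hV
    have hVinv : V⁻¹ * V = 1 := nonsing_inv_mul V hdet
    have hVinv' : V * V⁻¹ = 1 := mul_nonsing_inv V hdet
    have hD : auxD F n α = Matrix.diagonal fun k : Fin (n+1) => α + ((k : ℕ) : F) := rfl
    constructor
    · refine ⟨(-1 : F) • vecMulVec (auxE F n) (auxVec F n), 0, ?_, ?_⟩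
      · exact ⟨fun _ => auxE F n, fun _ => auxVec F n, fun _ => -1, fun _ => 0, by
          simp [Fin.sum_univ_one], by simp [Fin.sum_univ_one]⟩
      · have hA : (α • (1 : Matrix (Fin (n+1)) (Fin (n+1)) F) + jordanNil (n+1))
            - (-1 : F) • vecMulVec (auxE F n) (auxVec F n)
            = α • 1 + jordanNil (n+1) + vecMulVec (auxE F n) (auxVec F n) := by
          rw [neg_one_smul, sub_neg_eq_add]
        refine ⟨⟨V⁻¹, V, hVinv, hVinv'⟩, ⟨V, V⁻¹, hVinv', hVinv⟩, ?_, ?_⟩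
        · intro i j hij
          have h1 : V⁻¹ * (α • 1 + jordanNil (n+1) + vecMulVec (auxE F n) (auxVec F n)) * V
              = auxD F n α := by
            rw [mul_assoc, key_eq n α, ← mul_assoc, hVinv, one_mul]
          show (V⁻¹ * ((α • (1 : Matrix (Fin (n+1)) (Fin (n+1)) F) + jordanNil (n+1))
            - (-1 : F) • vecMulVec (auxE F n) (auxVec F n)) * V
            : Matrix (Fin (n+1)) (Fin (n+1)) F) i j = 0
          rw [hA, h1, hD]
          exact Matrix.diagonal_apply_ne _ (fun h => hij (by rw [h]))
        · intro i j hij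
          show (V⁻¹ * ((1 : Matrix (Fin (n+1)) (Fin (n+1)) F) - 0) * V : Matrix (Fin (n+1)) (Fin (n+1)) F) i j = 0
          rw [sub_zero, mul_one, hVinv]
          exact Matrix.one_apply_ne (fun h => hij (by rw [h]))
    · apply Nat.sInf_le
      refine ⟨fun i => if h : (i : ℕ) < n + 1 then (fun j => V j ⟨i, h⟩) else auxE F n,
        fun i => if h : (i : ℕ) < n + 1 then (fun j => V⁻¹ ⟨i, h⟩ j) else auxVec F n,
        fun i => if _ : (i : ℕ) < n + 1 then α + ((i : ℕ) : F) else -1,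
        fun i => if _ : (i : ℕ) < n + 1 then 1 else 0, ?_, ?_⟩
      · rw [Fin.sum_univ_castSucc]
        beta_reduce
        rw [dif_neg (by simp), dif_neg (by simp), dif_neg (by simp)]
        have hcast : ∀ (i : Fin (n+1)),
            (if h : ((i.castSucc : Fin (n+2)) : ℕ) < n + 1
              then α + (((i.castSucc : Fin (n+2)) : ℕ) : F) else -1) •
            vecMulVec
              (if h : ((i.castSucc : Fin (n+2)) : ℕ) < n + 1
                then (fun j => V j ⟨(i.castSucc : Fin (n+2)), h⟩) else auxE F n)
              (if h : ((i.castSucc : Fin (n+2)) : ℕ) < n + 1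
                then (fun j => V⁻¹ ⟨(i.castSucc : Fin (n+2)), h⟩ j) else auxVec F n)
            = (α + ((i : ℕ) : F)) •
              vecMulVec (fun j => V j i) (fun j => V⁻¹ i j) := by
          intro i
          have h : ((i.castSucc : Fin (n+2)) : ℕ) < n + 1 := by have := i.isLt; simp; omega
          rw [dif_pos h, dif_pos h, dif_pos h]
          rfl
        rw [Finset.sum_congr rfl (fun i _ => hcast i)]
        have : ∑ i : Fin (n+1), (α + ((i : ℕ) : F)) •
            vecMulVec (fun j => V j i) (fun j => V⁻¹ i j) = V * auxD F n α * V⁻¹ := by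
          rw [hD]; exact sum_col_row n _
        rw [this, ← auxM_eq n α, neg_one_smul]
        abel
      · rw [Fin.sum_univ_castSucc]
        beta_reduce
        rw [dif_neg (by simp)]
        have hcast : ∀ (i : Fin (n+1)),
            (if _ : ((i.castSucc : Fin (n+2)) : ℕ) < n + 1 then (1:F) else 0) •
            vecMulVec
              (if h : ((i.castSucc : Fin (n+2)) : ℕ) < n + 1
                then (fun j => V j ⟨(i.castSucc : Fin (n+2)), h⟩) else auxE F n)
              (if h : ((i.castSucc : Fin (n+2)) : ℕ) < n + 1
                then (fun j => V⁻¹ ⟨(i.castSucc : Fin (n+2)), h⟩ j) else auxVec F n)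
            = (1 : F) • vecMulVec (fun j => V j i) (fun j => V⁻¹ i j) := by
          intro i
          have h : ((i.castSucc : Fin (n+2)) : ℕ) < n + 1 := by have := i.isLt; simp; omega
          rw [dif_pos h, dif_pos h, dif_pos h]
          rfl
        rw [Finset.sum_congr rfl (fun i _ => hcast i)]
        have : ∑ i : Fin (n+1), (1 : F) •
            vecMulVec (fun j => V j i) (fun j => V⁻¹ i j) = V * 1 * V⁻¹ := by
          have := sum_col_row (F := F) n (fun _ => 1)
          rwa [Matrix.diagonal_one] at this
        rw [this, mul_one, hVinv', zero_smul, add_zero]
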